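/- ∫_0^{π/2} ∫_0^θ (u / sin u) du dθ = −π·G + (7/2)·ζ(3), where G is Catalan's constant. -/

import Mathlib

open Real Filter MeasureTheory Set intervalIntegral

noncomputable def catalanConst : ℝ := ∑' n : ℕ, (-1 : ℝ) ^ n / (2 * n + 1) ^ 2

noncomputable def zeta3 : ℝ := ∑' n : ℕ, (1 : ℝ) / (n + 1) ^ 3

namespace Stmt6

noncomputable def g (u : ℝ) : ℝ := if u = 0 then 1 else u / Real.sin u

noncomputable def w (u : ℝ) : ℝ := (π / 2 - u) * u

noncomputable def S (r u : ℝ) : ℝ :=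
  (2 * (r * Complex.exp (u * Complex.I)) / (1 - (r * Complex.exp (u * Complex.I)) ^ 2)).im

noncomputable def c (k : ℕ) : ℝ :=
  -(π / 2) * (-1) ^ k / (2 * k + 1) ^ 2 + 2 / (2 * k + 1) ^ 3

noncomputable def ρ (n : ℕ) : ℝ := 1 - 1 / (n + 2)

lemma continuousAt_g {u : ℝ} (hu : u ∈ Set.Ioo (-1 : ℝ) 3) : ContinuousAt g u := by
  rcases eq_or_ne u 0 with rfl | hu0
  · have h := Real.hasDerivAt_sin 0
    rw [hasDerivAt_iff_tendsto_slope] at h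
    have hsl : slope Real.sin 0 = fun v => Real.sin v / v := by
      funext v; rw [slope_def_field]; simp
    rw [hsl, Real.cos_zero] at h
    have h2 : Tendsto g (nhdsWithin 0 {(0:ℝ)}ᶜ) (nhds 1) := by
      have h3 := h.inv₀ one_ne_zero
      rw [inv_one] at h3
      refine h3.congr' ?_
      filter_upwards [self_mem_nhdsWithin] with v hv
      have hv' : v ≠ 0 := hv
      simp [g, hv', inv_div]
    have : Tendsto g (nhds 0) (nhds 1) := by
      rw [← nhdsNE_sup_pure 0]
      refine Tendsto.sup h2 ?_
      simpa [g] using tendsto_pure_nhds g 0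
    simpa [ContinuousAt, g] using this
  · have hsin : Real.sin u ≠ 0 := by
      rcases lt_or_gt_of_ne hu0 with h | h
      · have hpos : Real.sin (-u) > 0 := by
          apply Real.sin_pos_of_pos_of_lt_pi (by linarith)
          nlinarith [Real.pi_gt_three, hu.1]
        simp only [Real.sin_neg] at hpos; linarith
      · exact (Real.sin_pos_of_pos_of_lt_pi h (by nlinarith [Real.pi_gt_three, hu.2])).ne'
    have hc : ContinuousAt (fun v : ℝ => v / Real.sin v) u :=
      continuousAt_id.div Real.continuous_sin.continuousAt hsin
    refine hc.congr ?_
    have hopen : {v : ℝ | v ≠ 0} ∈ nhds u := isOpen_ne.mem_nhds hu0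
    filter_upwards [hopen] with v hv
    simp [g, hv]

lemma pi_half_lt_three : π / 2 < 3 := by nlinarith [Real.pi_lt_d2]

lemma mem_Ioo_of_Icc {u : ℝ} (hu : u ∈ Set.Icc 0 (π / 2)) : u ∈ Set.Ioo (-1 : ℝ) 3 :=
  ⟨by linarith [hu.1], lt_of_le_of_lt hu.2 pi_half_lt_three⟩

lemma g_cont_Icc : ContinuousOn g (Set.Icc 0 (π / 2)) := fun u hu =>
  (continuousAt_g (mem_Ioo_of_Icc hu)).continuousWithinAt

lemma g_intervalIntegrable {b : ℝ} (hb : b ∈ Set.Icc 0 (π / 2)) :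
    IntervalIntegrable g volume 0 b := by
  apply ContinuousOn.intervalIntegrable
  intro u hu
  refine (continuousAt_g ?_).continuousWithinAt
  rcases Set.mem_uIcc.mp hu with h | h
  · exact mem_Ioo_of_Icc ⟨h.1, le_trans h.2 hb.2⟩
  · exact mem_Ioo_of_Icc ⟨le_trans hb.1 h.1, le_trans h.2 (le_trans hb.1 hb.2)⟩

lemma hasDerivAt_F {x : ℝ} (hx : x ∈ Set.Icc 0 (π / 2)) :
    HasDerivAt (fun θ => ∫ u in (0:ℝ)..θ, g u) (g x) x := by
  refine intervalIntegral.integral_hasDerivAt_right (g_intervalIntegrable hx) ?_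
    (continuousAt_g (mem_Ioo_of_Icc hx))
  exact ⟨Set.Ioo (-1:ℝ) 3, (isOpen_Ioo).mem_nhds (mem_Ioo_of_Icc hx),
    ((continuousOn_of_forall_continuousAt (fun u hu => continuousAt_g hu)).aestronglyMeasurable
      measurableSet_Ioo)⟩

/-- Step A : reduce the double integral to a single integral. -/
lemma stepA : (∫ θ in (0:ℝ)..(π / 2), ∫ u in (0:ℝ)..θ, u / Real.sin u)
    = ∫ u in (0:ℝ)..(π / 2), w u * (Real.sin u)⁻¹ := by
  have h0 : ∀ᵐ u : ℝ, u ≠ 0 := by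
    refine (Countable.ae_notMem (Set.countable_singleton 0) _).mono ?_
    intro u hu; simpa using hu
  have huIcc : Set.uIcc (0:ℝ) (π/2) = Set.Icc 0 (π/2) := Set.uIcc_of_le (by positivity)
  have hibp := intervalIntegral.integral_mul_deriv_eq_deriv_mul
    (u := fun θ => ∫ u in (0:ℝ)..θ, g u) (u' := g)
    (v := fun θ => θ - π/2) (v' := fun _ => 1)
    (fun x hx => hasDerivAt_F (huIcc ▸ hx))
    (fun x _ => (hasDerivAt_id x).sub_const (π/2))
    ((g_cont_Icc.mono (by rw [huIcc])).intervalIntegrable)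
    (continuous_const.intervalIntegrable _ _)
  simp only [mul_one, intervalIntegral.integral_same, sub_self, mul_zero, zero_mul,
    zero_sub, sub_zero, neg_zero] at hibp
  calc (∫ θ in (0:ℝ)..(π / 2), ∫ u in (0:ℝ)..θ, u / Real.sin u)
      = ∫ θ in (0:ℝ)..(π / 2), ∫ u in (0:ℝ)..θ, g u := by
        apply intervalIntegral.integral_congr
        intro θ _
        apply intervalIntegral.integral_congr_ae
        filter_upwards [h0] with u hu _
        simp [g, hu]
    _ = -∫ x in (0:ℝ)..(π / 2), g x * (x - π/2) := hibp
    _ = ∫ u in (0:ℝ)..(π / 2), w u * (Real.sin u)⁻¹ := by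
        rw [← intervalIntegral.integral_neg]
        apply intervalIntegral.integral_congr_ae
        filter_upwards [h0] with u hu _
        simp only [g, hu, if_false, w]
        field_simp
        ring

lemma z_pow (r u : ℝ) (m : ℕ) :
    ((r : ℂ) * Complex.exp (u * Complex.I)) ^ m
      = Complex.ofReal (r ^ m) * Complex.exp (Complex.ofReal ((m : ℝ) * u) * Complex.I) := by
  rw [mul_pow, ← Complex.exp_nat_mul]
  congr 1
  · rw [Complex.ofReal_pow]
  · congr 1
    push_cast
    ring

lemma z_pow_im (r u : ℝ) (m : ℕ) :
    (((r : ℂ) * Complex.exp (u * Complex.I)) ^ m).im = r ^ m * Real.sin (m * u) := by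
  rw [z_pow]
  simp only [Complex.mul_im, Complex.exp_ofReal_mul_I_im, Complex.exp_ofReal_mul_I_re,
    Complex.ofReal_re, Complex.ofReal_im, zero_mul, mul_zero, add_zero, zero_add]

lemma z_pow_re (r u : ℝ) (m : ℕ) :
    (((r : ℂ) * Complex.exp (u * Complex.I)) ^ m).re = r ^ m * Real.cos (m * u) := by
  rw [z_pow]
  simp only [Complex.mul_re, Complex.exp_ofReal_mul_I_im, Complex.exp_ofReal_mul_I_re,
    Complex.ofReal_re, Complex.ofReal_im, zero_mul, mul_zero, sub_zero]

lemma hasSum_S {r : ℝ} (hr0 : 0 ≤ r) (hr1 : r < 1) (u : ℝ) :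
    HasSum (fun k : ℕ => 2 * r ^ (2 * k + 1) * Real.sin (((2 * k + 1 : ℕ) : ℝ) * u)) (S r u) := by
  set z := (r : ℂ) * Complex.exp (u * Complex.I) with hz
  have hnz : ‖z ^ 2‖ < 1 := by
    rw [norm_pow, hz, norm_mul, Complex.norm_real, Real.norm_eq_abs,
      Complex.norm_exp_ofReal_mul_I, mul_one, abs_of_nonneg hr0]
    nlinarith
  have h1 : HasSum (fun n : ℕ => (z ^ 2) ^ n) (1 - z ^ 2)⁻¹ :=
    hasSum_geometric_of_norm_lt_one hnz
  have h2 : HasSum (fun n : ℕ => 2 * z ^ (2 * n + 1)) (2 * z * (1 - z ^ 2)⁻¹) := by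
    have h2' : (fun n : ℕ => 2 * z ^ (2 * n + 1)) = fun n : ℕ => (2 * z) * (z ^ 2) ^ n := by
      funext n
      rw [pow_add, pow_mul, pow_one]
      ring
    rw [h2']
    exact h1.mul_left (2 * z)
  have h3 := Complex.hasSum_im h2
  have him : ∀ n : ℕ, (2 * z ^ (2 * n + 1)).im = 2 * r ^ (2 * n + 1) *
      Real.sin (((2 * n + 1 : ℕ) : ℝ) * u) := by
    intro n
    have hzz := z_pow_im r u (2 * n + 1)
    rw [← hz] at hzz
    have h2im : ∀ ww : ℂ, ((2:ℂ) * ww).im = 2 * ww.im := fun ww => by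
      simp [Complex.mul_im]
    rw [h2im, hzz]
    push_cast
    ring
  have hS : (2 * z * (1 - z ^ 2)⁻¹).im = S r u := by
    rw [S, mul_div_assoc, div_eq_mul_inv, ← hz, mul_assoc]
  rw [← hS]
  exact h3.congr_fun (fun n => (him n).symm)

lemma cos_nat_pi (k : ℕ) : Real.cos (k * π) = (-1 : ℝ) ^ k := by
  induction k with
  | zero => simp
  | succ n ih =>
    have h : ((n + 1 : ℕ) : ℝ) * π = n * π + π := by push_cast; ring
    rw [h, Real.cos_add_pi, ih, pow_succ]
    ring

lemma continuous_w : Continuous w := by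
  unfold w; fun_prop

lemma c_int (k : ℕ) :
    ∫ u in (0:ℝ)..(π / 2), w u * Real.sin (((2 * k + 1 : ℕ) : ℝ) * u) = c k := by
  set m : ℝ := ((2 * k + 1 : ℕ) : ℝ) with hm
  have hm1 : (1 : ℝ) ≤ m := by
    rw [hm]; push_cast; linarith [Nat.cast_nonneg (α := ℝ) k]
  have hm0 : m ≠ 0 := by linarith
  set H : ℝ → ℝ := fun u => -(w u) * Real.cos (m * u) / m
      + (π / 2 - 2 * u) * Real.sin (m * u) / m ^ 2 - 2 * Real.cos (m * u) / m ^ 3 with hH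
  have hderiv : ∀ u ∈ Set.uIcc (0:ℝ) (π / 2), HasDerivAt H (w u * Real.sin (m * u)) u := by
    intro u _
    have hmu : HasDerivAt (fun v : ℝ => m * v) m u := by
      simpa using (hasDerivAt_id u).const_mul m
    have hcos : HasDerivAt (fun v : ℝ => Real.cos (m * v)) (-Real.sin (m * u) * m) u := hmu.cos
    have hsin : HasDerivAt (fun v : ℝ => Real.sin (m * v)) (Real.cos (m * u) * m) u := hmu.sin
    have hw : HasDerivAt w (π / 2 - 2 * u) u := by
      have h2 := ((hasDerivAt_id' (𝕜 := ℝ) (x := u)).const_sub (π / 2)).mul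
        (hasDerivAt_id' (𝕜 := ℝ) (x := u))
      have h3 : HasDerivAt (fun x : ℝ => (π / 2 - x) * x) (π / 2 - 2 * u) u := by
        refine h2.congr_deriv ?_
        ring
      exact h3
    have hw2 : HasDerivAt (fun v : ℝ => π / 2 - 2 * v) (-2 : ℝ) u := by
      have h2 := ((hasDerivAt_id' (𝕜 := ℝ) (x := u)).const_mul (2:ℝ)).const_sub (π / 2)
      refine h2.congr_deriv ?_
      ring
    have h1 := (hw.neg.mul hcos).div_const m
    have h2 := (hw2.mul hsin).div_const (m ^ 2)
    have h3 := (hcos.const_mul (2:ℝ)).div_const (m ^ 3)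
    have h := (h1.add h2).sub h3
    refine h.congr_deriv ?_
    rw [Pi.neg_apply]
    field_simp
    ring
  rw [intervalIntegral.integral_eq_sub_of_hasDerivAt hderiv
    ((continuous_w.mul (Real.continuous_sin.comp (continuous_const.mul continuous_id))).intervalIntegrable _ _)]
  have hmpi : m * (π / 2) = k * π + π / 2 := by rw [hm]; push_cast; ring
  have hcosv : Real.cos (m * (π / 2)) = 0 := by
    rw [hmpi, Real.cos_add]
    simp [Real.sin_nat_mul_pi]
  have hsinv : Real.sin (m * (π / 2)) = (-1 : ℝ) ^ k := by
    rw [hmpi, Real.sin_add]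
    simp [Real.sin_nat_mul_pi, cos_nat_pi]
  have hw0 : w 0 = 0 := by simp [w]
  have hwpi : w (π / 2) = 0 := by simp [w]
  rw [hH]
  simp only [hw0, hwpi, hcosv, hsinv, mul_zero, zero_mul, neg_zero, zero_div, zero_add,
    Real.cos_zero, Real.sin_zero, mul_one]
  rw [c, hm]
  push_cast
  field_simp
  ring

lemma denom_ne {u : ℝ} (hu0 : 0 < u) (hu2 : u ≤ π / 2) (r : ℝ) :
    1 - ((r : ℂ) * Complex.exp (u * Complex.I)) ^ 2 ≠ 0 := by
  intro h
  rw [sub_eq_zero] at h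
  have hre := congrArg Complex.re h
  have him := congrArg Complex.im h
  rw [z_pow_re] at hre
  rw [z_pow_im] at him
  simp only [Complex.one_re, Complex.one_im] at hre him
  push_cast at hre him
  rcases eq_or_lt_of_le hu2 with heq | hlt
  · rw [heq, show (2 : ℝ) * (π / 2) = π by ring, Real.cos_pi] at hre
    nlinarith
  · have hs : 0 < Real.sin (2 * u) :=
      Real.sin_pos_of_pos_of_lt_pi (by linarith) (by linarith)
    have hr2 : r ^ 2 = 0 := by
      rcases mul_eq_zero.mp him.symm with h' | h'
      · exact h'
      · exact absurd h' hs.ne'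
    rw [hr2] at hre
    norm_num at hre

lemma S_one {u : ℝ} (hu0 : 0 < u) (hu2 : u ≤ π / 2) : S 1 u = (Real.sin u)⁻¹ := by
  have hs : Real.sin u ≠ 0 :=
    (Real.sin_pos_of_pos_of_lt_pi hu0 (by linarith [Real.pi_pos])).ne'
  have hs' : ((Real.sin u : ℝ) : ℂ) ≠ 0 := Complex.ofReal_ne_zero.mpr hs
  have hden := denom_ne hu0 hu2 1
  set E := Complex.exp (u * Complex.I) with hE
  have keymul : 2 * E * ((Real.sin u : ℝ) : ℂ) = Complex.I * (1 - E ^ 2) := by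
    rw [Complex.ofReal_sin, Complex.sin]
    have e1 : Complex.exp (-↑u * Complex.I) * Complex.exp (↑u * Complex.I) = 1 := by
      have h0 : (-↑u * Complex.I + ↑u * Complex.I : ℂ) = 0 := by ring
      rw [← Complex.exp_add, h0, Complex.exp_zero]
    rw [hE]
    linear_combination Complex.I * e1
  have hden1 : 1 - E ^ 2 ≠ 0 := by
    have := hden
    rwa [Complex.ofReal_one, one_mul] at this
  have hdiv : 2 * E / (1 - E ^ 2) = Complex.I / ((Real.sin u : ℝ) : ℂ) := by
    rw [div_eq_div_iff hden1 hs']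
    linear_combination keymul
  have him2 : (Complex.I / ((Real.sin u : ℝ) : ℂ)).im = (Real.sin u)⁻¹ := by
    rw [div_eq_mul_inv, ← Complex.ofReal_inv, Complex.mul_im, Complex.I_re, Complex.I_im,
      Complex.ofReal_re, Complex.ofReal_im]
    ring
  rw [S, Complex.ofReal_one, one_mul, ← hE, hdiv, him2]

lemma contS {r : ℝ} (hr0 : 0 ≤ r) (hr1 : r < 1) : Continuous fun u : ℝ => S r u := by
  apply Complex.continuous_im.comp
  have hE : Continuous fun u : ℝ => (r : ℂ) * Complex.exp (↑u * Complex.I) :=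
    continuous_const.mul (Complex.continuous_exp.comp (Complex.continuous_ofReal.mul continuous_const))
  refine (continuous_const.mul hE).div (continuous_const.sub (hE.pow 2)) ?_
  intro u
  apply sub_ne_zero.mpr
  intro h
  have habs := congrArg norm h
  rw [norm_one, norm_pow, norm_mul, Complex.norm_real, Real.norm_eq_abs, Complex.norm_exp_ofReal_mul_I, mul_one,
    abs_of_nonneg hr0] at habs
  nlinarith

lemma ρ_mem (n : ℕ) : ρ n ∈ Set.Ico (1/2 : ℝ) 1 := by
  have h2 : (0:ℝ) < (n:ℝ) + 2 := by positivity
  constructor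
  · have : 1 / ((n:ℝ) + 2) ≤ 1 / 2 := by
      apply one_div_le_one_div_of_le <;> [norm_num; linarith [Nat.cast_nonneg (α := ℝ) n]]
    rw [ρ]; linarith
  · have : 0 < 1 / ((n:ℝ) + 2) := by positivity
    rw [ρ]; linarith

lemma ρ_tendsto : Tendsto ρ atTop (nhds 1) := by
  have h : Tendsto (fun n : ℕ => 1 / ((n:ℝ) + 2)) atTop (nhds 0) :=
    tendsto_const_nhds.div_atTop (tendsto_atTop_add_const_right _ 2 tendsto_natCast_atTop_atTop)
  have hconst : Tendsto (fun _ : ℕ => (1:ℝ)) atTop (nhds 1) := tendsto_const_nhds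
  have h2 := hconst.sub h
  rw [sub_zero] at h2
  exact h2

lemma tendsto_S {u : ℝ} (hu0 : 0 < u) (hu2 : u ≤ π / 2) :
    Tendsto (fun n => S (ρ n) u) atTop (nhds ((Real.sin u)⁻¹)) := by
  have hE : Continuous fun r : ℝ => (r : ℂ) * Complex.exp (↑u * Complex.I) :=
    (Complex.continuous_ofReal.mul continuous_const)
  have hc : Continuous fun r : ℝ => S r u := by
    apply Complex.continuous_im.comp
    refine (continuous_const.mul hE).div (continuous_const.sub (hE.pow 2)) ?_
    intro r
    exact denom_ne hu0 hu2 r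
  have h := (hc.tendsto 1).comp ρ_tendsto
  rw [S_one hu0 hu2] at h
  exact h

lemma w_nonneg {u : ℝ} (h0 : 0 ≤ u) (h2 : u ≤ π / 2) : 0 ≤ w u := by
  rw [w]
  exact mul_nonneg (by linarith) h0

lemma boundS {r u : ℝ} (hr : r ∈ Set.Icc (1/2 : ℝ) 1) (hu : u ∈ Set.Ioc 0 (π / 2)) :
    |w u * S r u| ≤ π ^ 2 := by
  obtain ⟨hr1, hr2⟩ := hr
  obtain ⟨hu1, hu2⟩ := hu
  have hr0 : (0:ℝ) ≤ r := by linarith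
  set z := (r : ℂ) * Complex.exp (u * Complex.I) with hz
  have hD := denom_ne hu1 hu2 r
  have hDz : (1 : ℂ) - z ^ 2 ≠ 0 := by rw [hz]; exact hD
  have hpos : 0 < ‖1 - z ^ 2‖ := norm_pos_iff.mpr hDz
  have habsz : ‖2 * z‖ = 2 * r := by
    rw [hz, norm_mul, norm_mul, Complex.norm_real, Real.norm_eq_abs, Complex.norm_exp_ofReal_mul_I, mul_one,
      abs_of_nonneg hr0, Complex.norm_two]
  have hSle : |S r u| ≤ 2 / ‖1 - z ^ 2‖ := by
    have h1 : |S r u| ≤ ‖2 * z / (1 - z ^ 2)‖ := by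
      rw [S, ← hz]
      exact Complex.abs_im_le_norm _
    rw [norm_div, habsz] at h1
    refine h1.trans ?_
    exact (div_le_div_iff_of_pos_right hpos).mpr (by linarith)
  have hwval : |w u| = w u := abs_of_nonneg (w_nonneg hu1.le hu2)
  rw [abs_mul, hwval]
  rcases le_or_gt u (π/4) with hc | hc
  · have hsin2 : 2/π * (2*u) ≤ Real.sin (2*u) := Real.mul_le_sin (by linarith) (by linarith)
    have hs2 : 0 < Real.sin (2*u) := lt_of_lt_of_le (by positivity) hsin2
    have himz : (1 - z^2).im = -(r^2 * Real.sin (2*u)) := by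
      rw [hz, Complex.sub_im, Complex.one_im, z_pow_im]
      push_cast
      ring
    have hsin2' : 4*u ≤ π * Real.sin (2*u) := by
      have hm := mul_le_mul_of_nonneg_right hsin2 Real.pi_pos.le
      have he : 2/π*(2*u)*π = 4*u := by field_simp; ring
      rw [he] at hm
      linarith
    have hDge : u/π ≤ ‖1 - z^2‖ := by
      have h := Complex.abs_im_le_norm (1 - z^2)
      rw [himz, abs_neg, abs_of_nonneg (by positivity)] at h
      have h14 : (1/4:ℝ) ≤ r^2 := by nlinarith
      have hA : (1/4) * Real.sin (2*u) ≤ ‖1 - z^2‖ := by nlinarith [hs2]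
      have hApi := mul_le_mul_of_nonneg_right hA Real.pi_pos.le
      rw [div_le_iff₀ Real.pi_pos]
      nlinarith [hsin2']
    have hS2 : |S r u| ≤ 2*π/u := by
      refine hSle.trans ?_
      rw [div_le_div_iff₀ hpos hu1]
      have hm := mul_le_mul_of_nonneg_right hDge Real.pi_pos.le
      have he : u/π*π = u := by field_simp
      rw [he] at hm
      nlinarith [Real.pi_pos]
    have hwle : w u ≤ π/2 * u := by
      rw [w]; nlinarith
    have heq : (π/2*u) * (2*π/u) = π^2 := by
      field_simp
    calc w u * |S r u| ≤ (π/2*u) * (2*π/u) := by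
          apply mul_le_mul hwle hS2 (abs_nonneg _) (by positivity)
      _ = π^2 := heq
  · have hcos : Real.cos (2*u) ≤ 0 :=
      Real.cos_nonpos_of_pi_div_two_le_of_le (by linarith) (by linarith)
    have hrez : (1 - z^2).re = 1 - r^2 * Real.cos (2*u) := by
      rw [hz, Complex.sub_re, Complex.one_re, z_pow_re]
      push_cast
      ring
    have hDge : (1:ℝ) ≤ ‖1 - z^2‖ := by
      have h := Complex.abs_re_le_norm (1 - z^2)
      rw [hrez] at h
      have h2 : 1 - r^2 * Real.cos (2*u) ≤ |1 - r^2 * Real.cos (2*u)| := le_abs_self _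
      nlinarith
    have hS2 : |S r u| ≤ 2 := by
      refine hSle.trans ?_
      rw [div_le_iff₀ hpos]
      nlinarith
    have hwle : w u ≤ π^2/4 := by
      rw [w]; nlinarith [Real.pi_pos]
    calc w u * |S r u| ≤ (π^2/4) * 2 := by
          apply mul_le_mul hwle hS2 (abs_nonneg _) (by positivity)
      _ ≤ π^2 := by nlinarith [Real.pi_pos]

lemma stepB {r : ℝ} (hr0 : 0 ≤ r) (hr1 : r < 1) :
    ∫ u in (0:ℝ)..(π / 2), w u * S r u = ∑' k : ℕ, 2 * r ^ (2 * k + 1) * c k := by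
  have hle : (0:ℝ) ≤ π / 2 := by positivity
  set F : ℕ → ℝ → ℝ :=
    fun k u => w u * (2 * r ^ (2 * k + 1) * Real.sin (((2 * k + 1 : ℕ) : ℝ) * u)) with hF
  have hcont : ∀ k, Continuous (F k) := by
    intro k
    exact continuous_w.mul (continuous_const.mul
      (Real.continuous_sin.comp (continuous_const.mul continuous_id)))
  have hint : ∀ k, Integrable (F k) (volume.restrict (Set.Ioc 0 (π / 2))) :=
    fun k => (hcont k).integrableOn_Ioc
  have hwabs : ∀ u ∈ Set.Ioc (0:ℝ) (π/2), |w u| ≤ π^2/4 := by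
    intro u hu
    rw [abs_of_nonneg (w_nonneg hu.1.le hu.2), w]
    nlinarith [hu.1, hu.2, Real.pi_pos]
  have hptbd : ∀ k, ∀ u ∈ Set.Ioc (0:ℝ) (π/2), ‖F k u‖ ≤ π^2/2 * r^(2*k+1) := by
    intro k u hu
    rw [hF, Real.norm_eq_abs, abs_mul]
    have h1 := hwabs u hu
    have h2 : |2 * r ^ (2*k+1) * Real.sin (((2*k+1:ℕ):ℝ) * u)| ≤ 2 * r^(2*k+1) := by
      rw [abs_mul]
      have hs := Real.abs_sin_le_one (((2*k+1:ℕ):ℝ) * u)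
      have hnn : |(2:ℝ) * r^(2*k+1)| = 2 * r^(2*k+1) := abs_of_nonneg (by positivity)
      nlinarith [abs_nonneg ((2:ℝ) * r^(2*k+1))]
    have := mul_le_mul h1 h2 (abs_nonneg _) (by positivity)
    nlinarith [this]
  have hnormint : ∀ k, (∫ u in Set.Ioc (0:ℝ) (π/2), ‖F k u‖) ≤ (π^3/4) * r^(2*k+1) := by
    intro k
    have hi1 : Integrable (fun u => ‖F k u‖) (volume.restrict (Set.Ioc 0 (π/2))) := (hint k).norm
    have hi2 : Integrable (fun _ : ℝ => π^2/2 * r^(2*k+1)) (volume.restrict (Set.Ioc 0 (π/2))) := by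
      refine (integrableOn_const_iff).mpr (Or.inr ?_)
      rw [Real.volume_Ioc]
      exact ENNReal.ofReal_lt_top
    have hae : ∀ᵐ u ∂(volume.restrict (Set.Ioc (0:ℝ) (π/2))), ‖F k u‖ ≤ π^2/2 * r^(2*k+1) :=
      (ae_restrict_iff' measurableSet_Ioc).mpr (ae_of_all _ (hptbd k))
    have h := integral_mono_ae hi1 hi2 hae
    rw [MeasureTheory.integral_const] at h
    simp only [measureReal_def, Measure.restrict_apply_univ, Real.volume_Ioc, sub_zero, smul_eq_mul] at h
    rw [ENNReal.toReal_ofReal hle] at h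
    refine h.trans (le_of_eq ?_)
    ring
  have hgeo : Summable (fun k : ℕ => (π^3/4) * r^(2*k+1)) := by
    have h : Summable (fun k : ℕ => r * (r^2)^k) :=
      (summable_geometric_of_lt_one (by positivity) (by nlinarith)).mul_left r
    have h2 : Summable (fun k : ℕ => r^(2*k+1)) := by
      refine h.congr (fun k => ?_)
      rw [pow_add, pow_mul, pow_one]
      ring
    exact h2.mul_left _
  have hsum : Summable (fun k => ∫ u in Set.Ioc (0:ℝ) (π/2), ‖F k u‖) :=
    Summable.of_nonneg_of_le (fun k => integral_nonneg (fun u => norm_nonneg _)) hnormint hgeo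
  have hs := MeasureTheory.hasSum_integral_of_summable_integral_norm hint hsum
  have htsum : ∀ u : ℝ, (∑' k, F k u) = w u * S r u := fun u =>
    ((hasSum_S hr0 hr1 u).mul_left (w u)).tsum_eq
  have hone : ∀ k, (∫ u in Set.Ioc (0:ℝ) (π/2), F k u) = 2 * r^(2*k+1) * c k := by
    intro k
    rw [← intervalIntegral.integral_of_le hle]
    have he : ∀ u, F k u = (2 * r^(2*k+1)) * (w u * Real.sin (((2*k+1:ℕ):ℝ) * u)) := by
      intro u; rw [hF]; ring
    simp_rw [he]
    rw [intervalIntegral.integral_const_mul, c_int k]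
  rw [intervalIntegral.integral_of_le hle]
  have hcongr : (∫ u in Set.Ioc (0:ℝ) (π/2), w u * S r u)
      = ∫ u in Set.Ioc (0:ℝ) (π/2), ∑' k, F k u :=
    integral_congr_ae (ae_of_all _ (fun u => (htsum u).symm))
  rw [hcongr, ← hs.tsum_eq]
  exact tsum_congr hone

lemma stepC : Tendsto (fun n => ∫ u in (0:ℝ)..(π/2), w u * S (ρ n) u) atTop
    (nhds (∫ u in (0:ℝ)..(π/2), w u * (Real.sin u)⁻¹)) := by
  have hle : (0:ℝ) ≤ π/2 := by positivity
  simp_rw [intervalIntegral.integral_of_le hle]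
  refine MeasureTheory.tendsto_integral_of_dominated_convergence (fun _ => π^2) ?_ ?_ ?_ ?_
  · intro n
    exact (continuous_w.mul
      (contS (by linarith [(ρ_mem n).1]) (ρ_mem n).2)).aestronglyMeasurable
  · refine (integrableOn_const_iff).mpr (Or.inr ?_)
    rw [Real.volume_Ioc]
    exact ENNReal.ofReal_lt_top
  · intro n
    rw [ae_restrict_iff' measurableSet_Ioc]
    refine ae_of_all _ (fun u hu => ?_)
    rw [Real.norm_eq_abs]
    exact boundS ⟨(ρ_mem n).1, (ρ_mem n).2.le⟩ hu
  · rw [ae_restrict_iff' measurableSet_Ioc]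
    refine ae_of_all _ (fun u hu => ?_)
    exact (tendsto_S hu.1 hu.2).const_mul (w u)

lemma summable_inv_sq : Summable (fun k : ℕ => 1 / ((k:ℝ)+1)^2) := by
  have h := summable_one_div_nat_pow.mpr (by norm_num : 1 < 2)
  exact ((summable_nat_add_iff 1).mpr h).congr (fun k => by push_cast; ring)

lemma c_abs_le (k : ℕ) : |c k| ≤ (π/2 + 2) * (1/((k:ℝ)+1)^2) := by
  have hk0 : (0:ℝ) ≤ (k:ℝ) := Nat.cast_nonneg k
  have e2 : ((k:ℝ)+1)^2 ≤ (2*(k:ℝ)+1)^2 := by nlinarith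
  have e3 : ((k:ℝ)+1)^2 ≤ (2*(k:ℝ)+1)^3 := by nlinarith
  have habs : |(-1:ℝ)^k| = 1 := by rw [abs_pow]; simp
  have t1 : |(-(π/2)) * (-1:ℝ)^k / (2*(k:ℝ)+1)^2| ≤ (π/2) * (1/((k:ℝ)+1)^2) := by
    rw [abs_div, abs_mul, habs, mul_one, abs_neg,
      abs_of_nonneg (by positivity : (0:ℝ) ≤ π/2),
      abs_of_nonneg (by positivity : (0:ℝ) ≤ (2*(k:ℝ)+1)^2), mul_one_div]
    gcongr
  have t2 : |(2:ℝ) / (2*(k:ℝ)+1)^3| ≤ 2 * (1/((k:ℝ)+1)^2) := by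
    rw [abs_div, abs_of_nonneg (by norm_num : (0:ℝ) ≤ 2),
      abs_of_nonneg (by positivity : (0:ℝ) ≤ (2*(k:ℝ)+1)^3), mul_one_div]
    gcongr
  calc |c k| ≤ |(-(π/2)) * (-1:ℝ)^k / (2*(k:ℝ)+1)^2| + |(2:ℝ) / (2*(k:ℝ)+1)^3| := by
        rw [c]; exact abs_add_le _ _
    _ ≤ (π/2) * (1/((k:ℝ)+1)^2) + 2 * (1/((k:ℝ)+1)^2) := add_le_add t1 t2
    _ = (π/2 + 2) * (1/((k:ℝ)+1)^2) := by ring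

lemma summable_c_abs : Summable (fun k : ℕ => |c k|) :=
  Summable.of_nonneg_of_le (fun k => abs_nonneg _) c_abs_le (summable_inv_sq.mul_left _)

lemma stepD : Tendsto (fun n => ∑' k : ℕ, 2 * (ρ n)^(2*k+1) * c k) atTop
    (nhds (∑' k : ℕ, 2 * c k)) := by
  refine tendsto_tsum_of_dominated_convergence (bound := fun k => 2 * |c k|)
    (summable_c_abs.mul_left 2) ?_ ?_
  · intro k
    have h := ((ρ_tendsto.pow (2*k+1)).const_mul (2:ℝ)).mul_const (c k)
    simpa using h
  · refine Eventually.of_forall (fun n k => ?_)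
    rw [Real.norm_eq_abs, abs_mul, abs_mul]
    have h1 : |ρ n| ≤ 1 := by
      have h := ρ_mem n
      rw [abs_le]
      constructor <;> [linarith [h.1]; linarith [h.2.le]]
    have h2 : |(ρ n)^(2*k+1)| ≤ 1 := by
      rw [abs_pow]
      exact pow_le_one₀ (abs_nonneg _) h1
    have h3 : (0:ℝ) ≤ |c k| := abs_nonneg _
    have h4 : |(2:ℝ)| = 2 := by norm_num
    rw [h4]
    show 2 * |(ρ n)^(2*k+1)| * |c k| ≤ 2 * |c k|
    nlinarith [mul_le_mul_of_nonneg_right h2 h3]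

lemma summable_odd_cubes : Summable (fun k : ℕ => (1:ℝ)/(2*(k:ℝ)+1)^3) := by
  refine Summable.of_nonneg_of_le (fun k => by positivity) (fun k => ?_) summable_inv_sq
  refine one_div_le_one_div_of_le (by positivity) ?_
  have hk : (0:ℝ) ≤ (k:ℝ) := Nat.cast_nonneg k
  nlinarith [hk, sq_nonneg ((k:ℝ)), mul_nonneg (mul_nonneg hk hk) hk]

lemma summable_alt_sq : Summable (fun k : ℕ => (-1:ℝ)^k/(2*(k:ℝ)+1)^2) := by
  refine Summable.of_norm (Summable.of_nonneg_of_le (fun k => norm_nonneg _) (fun k => ?_)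
    summable_inv_sq)
  rw [Real.norm_eq_abs, abs_div, abs_pow, abs_neg, abs_one, one_pow,
    abs_of_nonneg (by positivity : (0:ℝ) ≤ (2*(k:ℝ)+1)^2)]
  exact one_div_le_one_div_of_le (by positivity) (by nlinarith [Nat.cast_nonneg (α := ℝ) k])

lemma sum_odd_cubes : ∑' k : ℕ, (1:ℝ)/(2*(k:ℝ)+1)^3 = 7/8 * zeta3 := by
  have hz : zeta3 = ∑' n : ℕ, (1:ℝ)/((n:ℝ)+1)^3 := rfl
  have he : Summable (fun k : ℕ => (1:ℝ)/(((2*k:ℕ):ℝ)+1)^3) :=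
    summable_odd_cubes.congr (fun k => by push_cast; ring)
  have ho : Summable (fun k : ℕ => (1:ℝ)/(((2*k+1:ℕ):ℝ)+1)^3) := by
    refine Summable.of_nonneg_of_le (fun k => by positivity) (fun k => ?_) summable_inv_sq
    push_cast
    exact one_div_le_one_div_of_le (by positivity) (by nlinarith [Nat.cast_nonneg (α := ℝ) k])
  have h := tsum_even_add_odd (f := fun n : ℕ => (1:ℝ)/((n:ℝ)+1)^3) he ho
  have h2 : (∑' k : ℕ, (1:ℝ)/(((2*k:ℕ):ℝ)+1)^3) = ∑' k : ℕ, (1:ℝ)/(2*(k:ℝ)+1)^3 :=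
    tsum_congr (fun k => by push_cast; ring)
  have h3 : (∑' k : ℕ, (1:ℝ)/(((2*k+1:ℕ):ℝ)+1)^3) = 1/8 * zeta3 := by
    rw [hz, ← tsum_mul_left]
    refine tsum_congr (fun k => ?_)
    push_cast
    field_simp
    ring
  rw [h2, h3] at h
  rw [← hz] at h
  linarith

lemma final_sum : ∑' k : ℕ, 2 * c k = -π * catalanConst + 7/2 * zeta3 := by
  have hcat : catalanConst = ∑' k : ℕ, (-1:ℝ)^k/(2*(k:ℝ)+1)^2 := rfl
  have e : (fun k : ℕ => 2 * c k)
      = fun k : ℕ => (-π) * ((-1:ℝ)^k/(2*(k:ℝ)+1)^2) + 4 * ((1:ℝ)/(2*(k:ℝ)+1)^3) := by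
    funext k
    rw [c]
    ring
  rw [e, Summable.tsum_add ((summable_alt_sq).mul_left (-π)) ((summable_odd_cubes).mul_left 4),
    tsum_mul_left, tsum_mul_left, sum_odd_cubes, ← hcat]
  ring

end Stmt6

theorem stmt_6 :
    ∫ θ in (0:ℝ)..(Real.pi / 2), ∫ u in (0:ℝ)..θ, u / Real.sin u =
      -Real.pi * catalanConst + (7 / 2) * zeta3 := by
  have h2 : (fun n => ∫ u in (0:ℝ)..(Real.pi/2), Stmt6.w u * Stmt6.S (Stmt6.ρ n) u)
      = fun n => ∑' k : ℕ, 2 * (Stmt6.ρ n) ^ (2*k+1) * Stmt6.c k := by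
    funext n
    exact Stmt6.stepB (by linarith [(Stmt6.ρ_mem n).1]) (Stmt6.ρ_mem n).2
  have h1 := Stmt6.stepC
  rw [h2] at h1
  have hkey := tendsto_nhds_unique h1 Stmt6.stepD
  rw [Stmt6.stepA, hkey, Stmt6.final_sum]
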